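/- Let ops : List (Option α) be a valid operation list and let j be a position with ops[j] = none (a pop). Then there exists a unique index i < j such that ops[i] = some a for some value a and the segment of operations strictly between positions i and j is balanced, meaning it contains equally many `some` (push) and `none` (pop) operations and every prefix of that segment contains at least as many pushes as pops; moreover, the value removed by the pop at position j is exactly a, the value pushed at the matching position i. In particular, the push/pop pairs of a valid operation list are well nested. -/

import Mathlib

/-- One step of stack execution: `some a` pushes `a` onto the top,
`none` pops the top element (tail of the empty list is empty). -/
def stackStep {α : Type*} (s : List α) : Option α → List α
  | some a => a :: s
  | none => s.tail

/-- The final stack state after executing the operation list `ops`,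
starting from the empty stack. -/
def stackRun {α : Type*} (ops : List (Option α)) : List α :=
  ops.foldl stackStep []

/-- An operation list is valid when no pop is performed on an empty stack:
for every prefix ending in `none`, the stack state just before that `none`
is nonempty. -/
def stackValid {α : Type*} (ops : List (Option α)) : Prop :=
  ∀ pre : List (Option α), pre ++ [none] <+: ops → stackRun pre ≠ []

/-- A segment of operations is balanced when it contains equally many pushes
(`some`) and pops (`none`), and every prefix of it contains at least as many
pushes as pops. -/
def balancedOps {α : Type*} (l : List (Option α)) : Prop :=
  l.countP Option.isSome = l.countP Option.isNone ∧
  ∀ p : List (Option α), p <+: l → p.countP Option.isNone ≤ p.countP Option.isSome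

section StackAuxLemmas

variable {α : Type*}

lemma stackRun_append (l : List (Option α)) (op : Option α) :
    stackRun (l ++ [op]) = stackStep (stackRun l) op := by
  simp [stackRun, List.foldl_append]

lemma run_take_succ (ops : List (Option α)) {k : ℕ} {op : Option α}
    (h : ops[k]? = some op) :
    stackRun (ops.take (k + 1)) = stackStep (stackRun (ops.take k)) op := by
  rw [List.take_succ, h]
  simp [stackRun_append]

lemma pop_nonempty {ops : List (Option α)} (hv : stackValid ops) {k : ℕ}
    (h : ops[k]? = some none) : stackRun (ops.take k) ≠ [] := by
  apply hv
  have ht : ops.take (k + 1) = ops.take k ++ [none] := by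
    rw [List.take_succ, h]; rfl
  exact ht ▸ List.take_prefix _ _

lemma count_identity {ops : List (Option α)} (hv : stackValid ops) :
    ∀ k : ℕ, (stackRun (ops.take k)).length + (ops.take k).countP Option.isNone
      = (ops.take k).countP Option.isSome := by
  intro k
  induction k with
  | zero => simp [stackRun]
  | succ k ih =>
    cases h : ops[k]? with
    | none =>
      have ht : ops.take (k + 1) = ops.take k := by rw [List.take_succ, h]; simp
      rw [ht]; exact ih
    | some op =>
      have hrun := run_take_succ ops h
      have ht : ops.take (k + 1) = ops.take k ++ [op] := by rw [List.take_succ, h]; rfl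
      cases op with
      | some a =>
        rw [ht, stackRun_append]
        simp only [stackStep, List.countP_append, List.length_cons]
        simp [Option.isSome, Option.isNone, List.countP_cons]
        omega
      | none =>
        have hne := pop_nonempty hv h
        have hpos : 0 < (stackRun (ops.take k)).length := List.length_pos_iff.mpr hne
        rw [ht, stackRun_append]
        simp only [stackStep, List.countP_append, List.length_tail]
        simp [Option.isSome, Option.isNone, List.countP_cons]
        omega

lemma height_eq {ops : List (Option α)} (hv : stackValid ops) (b m : ℕ) :
    (stackRun (ops.take (b + m))).length + ((ops.drop b).take m).countP Option.isNone
      = (stackRun (ops.take b)).length + ((ops.drop b).take m).countP Option.isSome := by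
  have h1 := count_identity hv (b + m)
  have h2 := count_identity hv b
  have hsplit : ops.take (b + m) = ops.take b ++ (ops.drop b).take m := List.take_add
  rw [hsplit, List.countP_append, List.countP_append, ← hsplit] at h1
  omega

lemma drop_run {ops : List (Option α)} (hv : stackValid ops) {i j : ℕ}
    (hjlen : j < ops.length)
    (hge : ∀ k, i < k → k ≤ j →
      (stackRun (ops.take (i + 1))).length ≤ (stackRun (ops.take k)).length) :
    ∀ d, i + 1 + d ≤ j →
      (stackRun (ops.take (i + 1 + d))).drop
          ((stackRun (ops.take (i + 1 + d))).length - (stackRun (ops.take (i + 1))).length)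
        = stackRun (ops.take (i + 1)) := by
  intro d
  induction d with
  | zero => intro _; simp
  | succ d ih =>
    intro hd
    have hd' : i + 1 + d ≤ j := by omega
    have ih' := ih hd'
    have hk : i + 1 + (d + 1) = (i + 1 + d) + 1 := by omega
    have hop : ops[i+1+d]? = some ops[i+1+d] := List.getElem?_eq_getElem (by omega)
    have hrun := run_take_succ ops hop
    have hgek := hge (i + 1 + d) (by omega) (by omega)
    cases hcase : ops[i+1+d] with
    | some a =>
      rw [hcase] at hrun
      rw [hk, hrun]
      simp only [stackStep, List.length_cons]
      have heq : (stackRun (ops.take (i+1+d))).length + 1 - (stackRun (ops.take (i+1))).length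
          = ((stackRun (ops.take (i+1+d))).length - (stackRun (ops.take (i+1))).length) + 1 := by
        omega
      rw [heq, List.drop_succ_cons]
      exact ih'
    | none =>
      rw [hcase] at hrun
      have hne := pop_nonempty hv (hcase ▸ hop)
      have hpos : 0 < (stackRun (ops.take (i+1+d))).length := List.length_pos_iff.mpr hne
      have hgek1 := hge (i + 1 + d + 1) (by omega) (by omega)
      rw [hrun] at hgek1
      simp only [stackStep, List.length_tail] at hgek1
      rw [hk, hrun]
      simp only [stackStep, List.length_tail]
      rw [← List.drop_one, List.drop_drop]
      have heq : 1 + ((stackRun (ops.take (i+1+d))).length - 1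
            - (stackRun (ops.take (i+1))).length)
          = (stackRun (ops.take (i+1+d))).length - (stackRun (ops.take (i+1))).length := by
        omega
      rw [heq]
      exact ih'

end StackAuxLemmas

/-- LIFO matching: in a valid operation list, every pop at position `j` has a
unique matching push at a position `i < j` such that the operations strictly
between `i` and `j` form a balanced segment, and the value removed by the pop
at `j` (the head of the stack state after the first `j` operations) is exactly
the value pushed at `i`. -/
theorem pop_has_unique_matching_push {α : Type*} (ops : List (Option α))
    (hvalid : stackValid ops) (j : ℕ) (hj : ops[j]? = some none) :
    ∃! i : ℕ, i < j ∧
      (∃ a, ops[i]? = some (some a) ∧ (stackRun (ops.take j)).head? = some a) ∧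
      balancedOps ((ops.drop (i + 1)).take (j - (i + 1))) := by
  classical
  have hjlen : j < ops.length := by
    by_contra h
    rw [List.getElem?_eq_none (le_of_not_gt h)] at hj
    exact Option.some_ne_none _ hj.symm
  have hjne : stackRun (ops.take j) ≠ [] := pop_nonempty hvalid hj
  have hjpos : 0 < (stackRun (ops.take j)).length := List.length_pos_iff.mpr hjne
  have hj0 : j ≠ 0 := by
    intro h; subst h; simp [stackRun] at hjne
  set i := Nat.findGreatest
      (fun k => (stackRun (ops.take k)).length < (stackRun (ops.take j)).length)
      (j - 1) with hidef
  have hP0 : (stackRun (ops.take 0)).length < (stackRun (ops.take j)).length := by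
    simpa [stackRun] using hjpos
  have hPi : (stackRun (ops.take i)).length < (stackRun (ops.take j)).length :=
    Nat.findGreatest_spec
      (P := fun k => (stackRun (ops.take k)).length < (stackRun (ops.take j)).length)
      (Nat.zero_le _) hP0
  have hij : i < j := lt_of_le_of_lt (Nat.findGreatest_le _) (by omega)
  have hge : ∀ k, i < k → k ≤ j →
      (stackRun (ops.take j)).length ≤ (stackRun (ops.take k)).length := by
    intro k hik hkj
    rcases eq_or_lt_of_le hkj with h | h
    · rw [h]
    · have hnk := Nat.findGreatest_is_greatest (hidef ▸ hik) (by omega)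
      simp only [not_lt] at hnk
      exact hnk
  have hopi : ops[i]? = some ops[i] := List.getElem?_eq_getElem (by omega)
  have hstepi := run_take_succ ops hopi
  have hi1 : (stackRun (ops.take j)).length ≤ (stackRun (ops.take (i+1))).length :=
    hge (i+1) (by omega) (by omega)
  obtain ⟨a, hcase⟩ : ∃ a, ops[i] = some a := by
    cases hcase : ops[i] with
    | none =>
      exfalso
      rw [hcase] at hstepi
      have hle : (stackRun (ops.take (i+1))).length ≤ (stackRun (ops.take i)).length := by
        rw [hstepi]; simp only [stackStep, List.length_tail]; omega
      omega
    | some a => exact ⟨a, rfl⟩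
  rw [hcase] at hstepi hopi
  have hlen1 : (stackRun (ops.take (i+1))).length = (stackRun (ops.take i)).length + 1 := by
    rw [hstepi]; simp [stackStep]
  have hn : (stackRun (ops.take (i+1))).length = (stackRun (ops.take j)).length := by omega
  have hge' : ∀ k, i < k → k ≤ j →
      (stackRun (ops.take (i+1))).length ≤ (stackRun (ops.take k)).length := by
    intro k h1 h2; rw [hn]; exact hge k h1 h2
  have hdrop := drop_run hvalid hjlen hge' (j - (i+1)) (by omega)
  have hji : i + 1 + (j - (i+1)) = j := by omega
  rw [hji, hn, Nat.sub_self, List.drop_zero] at hdrop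
  have hhead : (stackRun (ops.take j)).head? = some a := by
    rw [hdrop, hstepi]; rfl
  have hbal : balancedOps ((ops.drop (i + 1)).take (j - (i + 1))) := by
    constructor
    · have h := height_eq hvalid (i+1) (j - (i+1))
      rw [hji] at h
      omega
    · intro p hp
      have hplen : p.length ≤ j - (i+1) :=
        le_trans hp.length_le (by rw [List.length_take]; exact min_le_left _ _)
      have hpt' : p = (ops.drop (i+1)).take p.length := by
        conv_lhs => rw [List.prefix_iff_eq_take.mp hp]
        rw [List.take_take, min_eq_left hplen]
      have h := height_eq hvalid (i+1) p.length
      rw [← hpt'] at h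
      have hgk := hge' (i+1+p.length) (by omega) (by omega)
      omega
  refine ⟨i, ⟨hij, ⟨a, hopi, hhead⟩, hbal⟩, ?_⟩
  rintro y ⟨hyj, ⟨b, hopy, -⟩, hbaly⟩
  have hstepy := run_take_succ ops hopy
  have hleny : (stackRun (ops.take (y+1))).length = (stackRun (ops.take y)).length + 1 := by
    rw [hstepy]; simp [stackStep]
  have hyj' : (stackRun (ops.take j)).length = (stackRun (ops.take (y+1))).length := by
    have h := height_eq hvalid (y+1) (j - (y+1))
    have hjy : y + 1 + (j - (y+1)) = j := by omega
    rw [hjy] at h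
    have hb := hbaly.1
    omega
  have hygw : ∀ m, m ≤ j - (y+1) →
      (stackRun (ops.take (y+1))).length ≤ (stackRun (ops.take (y+1+m))).length := by
    intro m hm
    have hpre : (ops.drop (y+1)).take m <+: (ops.drop (y+1)).take (j - (y+1)) := by
      have h := List.take_prefix m ((ops.drop (y+1)).take (j - (y+1)))
      rwa [List.take_take, min_eq_left hm] at h
    have hc := hbaly.2 _ hpre
    have h := height_eq hvalid (y+1) m
    omega
  by_contra hne
  rcases lt_or_gt_of_ne hne with hlt | hgt
  · have hm : i = y + 1 + (i - (y+1)) := by omega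
    have h := hygw (i - (y+1)) (by omega)
    rw [← hm] at h
    omega
  · have h := hge y hgt (by omega)
    omega
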